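/- Let V be a finite index set and let (μ⁽¹⁾, Σ⁽¹⁾), (μ⁽²⁾, Σ⁽²⁾) be two pairs of mean vectors and symmetric positive definite covariance matrices indexed by V. Then a minimal seed set for the two pairs exists and is unique; explicitly, the intersection D₀ := ⋂ { D ⊆ V : D is a seed set } of all seed sets is itself a seed set, is contained in every seed set, and is the unique minimal seed set. -/

import Mathlib

open Matrix

/-- Sub-matrix of `M` with rows indexed by `A` and columns indexed by `B`. -/
def msub {V : Type*} [Fintype V] [DecidableEq V] (M : Matrix V V ℝ) (A B : Finset V) :
    Matrix A B ℝ :=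
  M.submatrix (fun a => a.1) (fun b => b.1)

/-- Principal sub-matrix of `M` indexed by the finset `A`. -/
def psub {V : Type*} [Fintype V] [DecidableEq V] (M : Matrix V V ℝ) (A : Finset V) :
    Matrix A A ℝ :=
  msub M A A

/-- Sub-vector of `x` indexed by the finset `A`. -/
def rest {V : Type*} (x : V → ℝ) (A : Finset V) : A → ℝ := fun a => x a.1

/-- The conditional parameters of `X_B` given `X_S` for a Gaussian vector with
parameters `(μ, Σ)`: the triple
`(μ_B − Σ_{B,S} Σ_S⁻¹ μ_S, Σ_{B,S} Σ_S⁻¹, Σ_B − Σ_{B,S} Σ_S⁻¹ Σ_{S,B})`. -/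
noncomputable def condParams {V : Type*} [Fintype V] [DecidableEq V]
    (μ : V → ℝ) (Sg : Matrix V V ℝ) (B S : Finset V) :
    (B → ℝ) × Matrix B S ℝ × Matrix B B ℝ :=
  (rest μ B - (msub Sg B S * (psub Sg S)⁻¹) *ᵥ rest μ S,
   msub Sg B S * (psub Sg S)⁻¹,
   psub Sg B - msub Sg B S * (psub Sg S)⁻¹ * msub Sg S B)

/-- `D` is a seed set for the pairs `(μ⁽¹⁾, Σ⁽¹⁾)`, `(μ⁽²⁾, Σ⁽²⁾)` if the conditional
parameters of `X_{V∖D}` given `X_D` coincide for the two pairs.  (For `D = V` the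
condition is vacuous, and for `D = ∅` it amounts to equality of the two pairs.) -/
def IsSeedSet {V : Type*} [Fintype V] [DecidableEq V]
    (μ₁ : V → ℝ) (S₁ : Matrix V V ℝ) (μ₂ : V → ℝ) (S₂ : Matrix V V ℝ)
    (D : Finset V) : Prop :=
  condParams μ₁ S₁ Dᶜ D = condParams μ₂ S₂ Dᶜ D

/-- `D` is a minimal seed set if it is a seed set and no proper subset of it is a
seed set. -/
def IsMinimalSeedSet {V : Type*} [Fintype V] [DecidableEq V]
    (μ₁ : V → ℝ) (S₁ : Matrix V V ℝ) (μ₂ : V → ℝ) (S₂ : Matrix V V ℝ)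
    (D : Finset V) : Prop :=
  IsSeedSet μ₁ S₁ μ₂ S₂ D ∧ ∀ D' ⊂ D, ¬ IsSeedSet μ₁ S₁ μ₂ S₂ D'

section Aux

variable {V : Type*} [Fintype V] [DecidableEq V]

lemma posDef_submatrix {m : Type*} [Fintype m]
    {M : Matrix V V ℝ} (hM : M.PosDef) {e : m → V} (he : Function.Injective e) :
    (M.submatrix e e).PosDef := by
  refine posDef_iff_dotProduct_mulVec.mpr ⟨hM.1.submatrix e, fun x hx => ?_⟩
  set y : V → ℝ := Function.extend e x (fun _ => (0:ℝ)) with hy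
  have hyv : ∀ a, y (e a) = x a := fun a => he.extend_apply x _ a
  have hy0 : ∀ v, v ∉ Finset.univ.image e → y v = 0 := by
    intro v hv
    refine Function.extend_apply' x _ v ?_
    rintro ⟨a, rfl⟩
    exact hv (Finset.mem_image_of_mem e (Finset.mem_univ a))
  have hMy : ∀ a, (M *ᵥ y) (e a) = ((M.submatrix e e) *ᵥ x) a := by
    intro a
    simp only [mulVec, dotProduct, submatrix_apply]
    rw [← Finset.sum_subset (Finset.subset_univ (Finset.univ.image e))
      (fun v _ hv => by rw [hy0 v hv, mul_zero])]
    rw [Finset.sum_image (fun i _ j _ h => he h)]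
    exact Finset.sum_congr rfl fun b _ => by rw [hyv]
  have key : star x ⬝ᵥ (M.submatrix e e) *ᵥ x = star y ⬝ᵥ M *ᵥ y := by
    simp only [dotProduct, star_trivial]
    rw [← Finset.sum_subset (Finset.subset_univ (Finset.univ.image e))
      (fun v _ hv => by rw [hy0 v hv, zero_mul])]
    rw [Finset.sum_image (fun i _ j _ h => he h)]
    exact (Finset.sum_congr rfl fun a _ => by rw [hyv, hMy]).symm
  rw [key]
  refine hM.dotProduct_mulVec_pos (x := y) fun h0 => hx ?_
  funext a
  have := congrFun h0 (e a)
  rw [hyv] at this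
  exact this

lemma msub_mul (M N : Matrix V V ℝ) (B C D : Finset V) :
    msub (M * N) B C = msub M B Dᶜ * msub N Dᶜ C + msub M B D * msub N D C := by
  ext b c
  simp only [msub, submatrix_apply, Matrix.mul_apply, Matrix.add_apply]
  rw [Finset.sum_coe_sort Dᶜ (fun v => M b.1 v * N v c.1),
    Finset.sum_coe_sort D (fun v => M b.1 v * N v c.1),
    Finset.sum_compl_add_sum]

lemma rest_mulVec (M : Matrix V V ℝ) (x : V → ℝ) (B D : Finset V) :
    rest (M *ᵥ x) B = msub M B Dᶜ *ᵥ rest x Dᶜ + msub M B D *ᵥ rest x D := by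
  funext b
  simp only [rest, msub, mulVec, dotProduct, submatrix_apply, Pi.add_apply]
  rw [Finset.sum_coe_sort Dᶜ (fun v => M b.1 v * x v),
    Finset.sum_coe_sort D (fun v => M b.1 v * x v),
    Finset.sum_compl_add_sum]

lemma psub_one (A : Finset V) : psub (1 : Matrix V V ℝ) A = 1 := by
  ext a b
  rw [psub, msub, submatrix_one _ Subtype.val_injective]

lemma msub_one_compl (D : Finset V) : msub (1 : Matrix V V ℝ) Dᶜ D = 0 := by
  ext a d
  have : a.1 ≠ d.1 := by
    intro h
    exact (Finset.mem_compl.mp a.2) (h ▸ d.2)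
  simp [msub, Matrix.one_apply, this]

end Aux

section Blocks

variable {V : Type*} [Fintype V] [DecidableEq V]

lemma psub_posDef {M : Matrix V V ℝ} (hM : M.PosDef) (A : Finset V) :
    (psub M A).PosDef :=
  posDef_submatrix hM Subtype.val_injective

lemma blocks₁ {Sg : Matrix V V ℝ} (hS : Sg.PosDef) (D : Finset V) :
    msub Sg⁻¹ Dᶜ D = -(msub Sg⁻¹ Dᶜ Dᶜ * (msub Sg Dᶜ D * (psub Sg D)⁻¹)) := by
  have hKS : Sg⁻¹ * Sg = 1 := Matrix.nonsing_inv_mul _ (isUnit_iff_ne_zero.mpr hS.det_pos.ne')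
  have hAD : msub Sg⁻¹ Dᶜ Dᶜ * msub Sg Dᶜ D + msub Sg⁻¹ Dᶜ D * msub Sg D D = 0 := by
    have := (msub_mul Sg⁻¹ Sg Dᶜ D D).symm
    rwa [hKS, msub_one_compl] at this
  have hDinv : msub Sg D D * (psub Sg D)⁻¹ = 1 :=
    Matrix.mul_nonsing_inv _ (isUnit_iff_ne_zero.mpr (psub_posDef hS D).det_pos.ne')
  calc msub Sg⁻¹ Dᶜ D = msub Sg⁻¹ Dᶜ D * (msub Sg D D * (psub Sg D)⁻¹) := by
        rw [hDinv, Matrix.mul_one]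
    _ = (msub Sg⁻¹ Dᶜ D * msub Sg D D) * (psub Sg D)⁻¹ := by rw [Matrix.mul_assoc]
    _ = (-(msub Sg⁻¹ Dᶜ Dᶜ * msub Sg Dᶜ D)) * (psub Sg D)⁻¹ := by
        rw [eq_neg_of_add_eq_zero_right hAD]
    _ = -(msub Sg⁻¹ Dᶜ Dᶜ * (msub Sg Dᶜ D * (psub Sg D)⁻¹)) := by
        rw [Matrix.neg_mul, Matrix.mul_assoc]

lemma blocks₂ {Sg : Matrix V V ℝ} (hS : Sg.PosDef) (D : Finset V) :
    msub Sg⁻¹ Dᶜ Dᶜ *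
      (msub Sg Dᶜ Dᶜ - msub Sg Dᶜ D * (psub Sg D)⁻¹ * msub Sg D Dᶜ) = 1 := by
  have hKS : Sg⁻¹ * Sg = 1 := Matrix.nonsing_inv_mul _ (isUnit_iff_ne_zero.mpr hS.det_pos.ne')
  have hAA : msub Sg⁻¹ Dᶜ Dᶜ * msub Sg Dᶜ Dᶜ + msub Sg⁻¹ Dᶜ D * msub Sg D Dᶜ = 1 := by
    have := (msub_mul Sg⁻¹ Sg Dᶜ Dᶜ D).symm
    rw [hKS] at this
    rw [show msub (1 : Matrix V V ℝ) Dᶜ Dᶜ = 1 from psub_one Dᶜ] at this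
    exact this
  rw [blocks₁ hS D] at hAA
  rw [Matrix.mul_sub, sub_eq_add_neg, ← Matrix.mul_assoc, ← Matrix.neg_mul]
  exact hAA

end Blocks

section Char

variable {V : Type*} [Fintype V] [DecidableEq V]

lemma condParams_char (Sg : Matrix V V ℝ) (hS : Sg.PosDef) (μ : V → ℝ) (D : Finset V) :
    condParams μ Sg Dᶜ D =
      ((msub Sg⁻¹ Dᶜ Dᶜ)⁻¹ *ᵥ rest (Sg⁻¹ *ᵥ μ) Dᶜ,
       -((msub Sg⁻¹ Dᶜ Dᶜ)⁻¹ * msub Sg⁻¹ Dᶜ D),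
       (msub Sg⁻¹ Dᶜ Dᶜ)⁻¹) := by
  set R := msub Sg Dᶜ D * (psub Sg D)⁻¹ with hR
  set C := msub Sg Dᶜ Dᶜ - msub Sg Dᶜ D * (psub Sg D)⁻¹ * msub Sg D Dᶜ with hC
  have hC1 : msub Sg⁻¹ Dᶜ Dᶜ * C = 1 := blocks₂ hS D
  have hC2 : C * msub Sg⁻¹ Dᶜ Dᶜ = 1 := mul_eq_one_comm.mp hC1
  have hCinv : (msub Sg⁻¹ Dᶜ Dᶜ)⁻¹ = C := Matrix.inv_eq_right_inv hC1
  have hsnd : -((msub Sg⁻¹ Dᶜ Dᶜ)⁻¹ * msub Sg⁻¹ Dᶜ D) = R := by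
    rw [hCinv, blocks₁ hS D, ← hR, Matrix.mul_neg, neg_neg, ← Matrix.mul_assoc, hC2,
      Matrix.one_mul]
  have hfst : (msub Sg⁻¹ Dᶜ Dᶜ)⁻¹ *ᵥ rest (Sg⁻¹ *ᵥ μ) Dᶜ = rest μ Dᶜ - R *ᵥ rest μ D := by
    rw [hCinv, rest_mulVec Sg⁻¹ μ Dᶜ D, Matrix.mulVec_add, Matrix.mulVec_mulVec,
      Matrix.mulVec_mulVec, hC2, Matrix.one_mulVec, blocks₁ hS D, ← hR, Matrix.mul_neg,
      Matrix.neg_mulVec, ← Matrix.mul_assoc, hC2, Matrix.one_mul, ← sub_eq_add_neg]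
  show (rest μ Dᶜ - R *ᵥ rest μ D, R, C) = _
  rw [hsnd, hfst, hCinv]

lemma seedSet_iff_blocks {μ₁ μ₂ : V → ℝ} {S₁ S₂ : Matrix V V ℝ}
    (h₁ : S₁.PosDef) (h₂ : S₂.PosDef) (D : Finset V) :
    IsSeedSet μ₁ S₁ μ₂ S₂ D ↔
      (rest (S₁⁻¹ *ᵥ μ₁) Dᶜ = rest (S₂⁻¹ *ᵥ μ₂) Dᶜ ∧
       msub S₁⁻¹ Dᶜ D = msub S₂⁻¹ Dᶜ D ∧
       msub S₁⁻¹ Dᶜ Dᶜ = msub S₂⁻¹ Dᶜ Dᶜ) := by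
  have hK₁ : (msub S₁⁻¹ Dᶜ Dᶜ).PosDef := psub_posDef h₁.inv Dᶜ
  have hK₂ : (msub S₂⁻¹ Dᶜ Dᶜ).PosDef := psub_posDef h₂.inv Dᶜ
  constructor
  · intro h
    unfold IsSeedSet at h
    rw [condParams_char S₁ h₁ μ₁ D, condParams_char S₂ h₂ μ₂ D] at h
    have hm := congrArg Prod.fst h
    have hRe := congrArg (fun p => p.2.1) h
    have hCe := congrArg (fun p => p.2.2) h
    simp only at hm hRe hCe
    have hAA : msub S₁⁻¹ Dᶜ Dᶜ = msub S₂⁻¹ Dᶜ Dᶜ := by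
      have := congrArg (fun M => M⁻¹) hCe
      rwa [Matrix.nonsing_inv_nonsing_inv _ (isUnit_iff_ne_zero.mpr hK₁.det_pos.ne'),
        Matrix.nonsing_inv_nonsing_inv _ (isUnit_iff_ne_zero.mpr hK₂.det_pos.ne')] at this
    have hinv1 : msub S₁⁻¹ Dᶜ Dᶜ * (msub S₁⁻¹ Dᶜ Dᶜ)⁻¹ = 1 :=
      Matrix.mul_nonsing_inv _ (isUnit_iff_ne_zero.mpr hK₁.det_pos.ne')
    refine ⟨?_, ?_, hAA⟩
    · have := congrArg (fun w => msub S₁⁻¹ Dᶜ Dᶜ *ᵥ w) hm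
      simp only [Matrix.mulVec_mulVec] at this
      rwa [hinv1, Matrix.one_mulVec, hAA,
        Matrix.mul_nonsing_inv _ (isUnit_iff_ne_zero.mpr hK₂.det_pos.ne'),
        Matrix.one_mulVec] at this
    · have := congrArg (fun M => msub S₁⁻¹ Dᶜ Dᶜ * M) hRe
      simp only [Matrix.mul_neg, ← Matrix.mul_assoc] at this
      have h2 := this
      rw [hinv1, Matrix.one_mul, hAA,
        Matrix.mul_nonsing_inv _ (isUnit_iff_ne_zero.mpr hK₂.det_pos.ne'),
        Matrix.one_mul, neg_inj] at h2
      exact h2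
  · rintro ⟨hm, hAD, hAA⟩
    unfold IsSeedSet
    rw [condParams_char S₁ h₁ μ₁ D, condParams_char S₂ h₂ μ₂ D, hm, hAD, hAA]

/-- Entrywise characterization of seed sets. -/
lemma seedSet_iff_rows {μ₁ μ₂ : V → ℝ} {S₁ S₂ : Matrix V V ℝ}
    (h₁ : S₁.PosDef) (h₂ : S₂.PosDef) (D : Finset V) :
    IsSeedSet μ₁ S₁ μ₂ S₂ D ↔
      ∀ i ∉ D, (∀ j, S₁⁻¹ i j = S₂⁻¹ i j) ∧ (S₁⁻¹ *ᵥ μ₁) i = (S₂⁻¹ *ᵥ μ₂) i := by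
  rw [seedSet_iff_blocks h₁ h₂ D]
  constructor
  · rintro ⟨hm, hAD, hAA⟩ i hi
    have hi' : i ∈ Dᶜ := Finset.mem_compl.mpr hi
    refine ⟨fun j => ?_, congrFun hm ⟨i, hi'⟩⟩
    by_cases hj : j ∈ D
    · exact congrFun (congrFun hAD ⟨i, hi'⟩) ⟨j, hj⟩
    · exact congrFun (congrFun hAA ⟨i, hi'⟩) ⟨j, Finset.mem_compl.mpr hj⟩
  · intro h
    refine ⟨funext fun i => (h i.1 (Finset.mem_compl.mp i.2)).2, ?_, ?_⟩ <;>
      · ext i j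
        exact (h i.1 (Finset.mem_compl.mp i.2)).1 j.1

end Char

/-- The minimal seed set exists and is unique: the intersection `D₀` of all seed sets
(characterized by `v ∈ D₀ ↔ v` belongs to every seed set) is itself a seed set, is
contained in every seed set, is a minimal seed set, and is the unique minimal seed set. -/
theorem stmt_11 {V : Type*} [Fintype V] [DecidableEq V]
    (μ₁ μ₂ : V → ℝ) (S₁ S₂ : Matrix V V ℝ)
    (h₁sym : S₁.IsSymm) (h₂sym : S₂.IsSymm)
    (h₁ : S₁.PosDef) (h₂ : S₂.PosDef) :
    ∃ D₀ : Finset V,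
      (∀ v : V, v ∈ D₀ ↔ ∀ D : Finset V, IsSeedSet μ₁ S₁ μ₂ S₂ D → v ∈ D) ∧
      IsSeedSet μ₁ S₁ μ₂ S₂ D₀ ∧
      (∀ D : Finset V, IsSeedSet μ₁ S₁ μ₂ S₂ D → D₀ ⊆ D) ∧
      IsMinimalSeedSet μ₁ S₁ μ₂ S₂ D₀ ∧
      (∀ D' : Finset V, IsMinimalSeedSet μ₁ S₁ μ₂ S₂ D' → D' = D₀) := by
  classical
  set D₀ : Finset V := Finset.univ.filter
    (fun v => ∀ D : Finset V, IsSeedSet μ₁ S₁ μ₂ S₂ D → v ∈ D) with hD₀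
  have hmem : ∀ v : V, v ∈ D₀ ↔ ∀ D : Finset V, IsSeedSet μ₁ S₁ μ₂ S₂ D → v ∈ D := by
    intro v; simp [hD₀]
  have hsub : ∀ D : Finset V, IsSeedSet μ₁ S₁ μ₂ S₂ D → D₀ ⊆ D := by
    intro D hD v hv
    exact (hmem v).mp hv D hD
  have hseed : IsSeedSet μ₁ S₁ μ₂ S₂ D₀ := by
    rw [seedSet_iff_rows h₁ h₂]
    intro i hi
    obtain ⟨D, hD, hiD⟩ : ∃ D : Finset V, IsSeedSet μ₁ S₁ μ₂ S₂ D ∧ i ∉ D := by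
      by_contra hcon
      push_neg at hcon
      exact hi ((hmem i).mpr hcon)
    exact ((seedSet_iff_rows h₁ h₂ D).mp hD) i hiD
  have hmin : IsMinimalSeedSet μ₁ S₁ μ₂ S₂ D₀ := by
    exact ⟨hseed, fun D' hD' hD'seed => hD'.not_subset (hsub D' hD'seed)⟩
  refine ⟨D₀, hmem, hseed, hsub, hmin, fun D' hD' => ?_⟩
  by_contra hne
  exact hD'.2 D₀ (Finset.ssubset_iff_subset_ne.mpr ⟨hsub D' hD'.1, fun h => hne h.symm⟩) hseed
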